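/- Fix ℓ, h with 0 ≤ ℓ ≤ 1/4 ≤ h ≤ 1 and set ℓ' = max(ℓ, 1 − 3h). For every measurement dependent local full distribution P on {0,1}^4 (P(a,b,x,y) = ∑_λ ρ(λ) q_λ(x,y) α_λ(a,x) β_λ(b,y), with ℓ ≤ q_λ(x,y) ≤ h), the full-probability CHSH expression ∑_{a,b,x,y} (−1)^{a+b+x·y} P(a,b,x,y) is at most 1 − 2ℓ'. -/
import Mathlib

lemma chsh_aux (m a b c d u0 u1 v0 v1 : ℝ) (hm : 0 ≤ m)
    (ha : m ≤ a) (hb : m ≤ b) (hc : m ≤ c) (hd : m ≤ d)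
    (hsum : a + b + c + d = 1)
    (hu0 : |u0| ≤ 1) (hu1 : |u1| ≤ 1) (hv0 : |v0| ≤ 1) (hv1 : |v1| ≤ 1) :
    a * (u0 * v0) + b * (u0 * v1) + c * (u1 * v0) - d * (u1 * v1) ≤ 1 - 2 * m := by
  obtain ⟨hu0l, hu0r⟩ := abs_le.mp hu0
  obtain ⟨hu1l, hu1r⟩ := abs_le.mp hu1
  obtain ⟨hv0l, hv0r⟩ := abs_le.mp hv0
  obtain ⟨hv1l, hv1r⟩ := abs_le.mp hv1
  have h1 : a * (u0 * v0) + b * (u0 * v1) ≤ |a * v0 + b * v1| := by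
    have e : a * (u0 * v0) + b * (u0 * v1) = u0 * (a * v0 + b * v1) := by ring
    rw [e]
    calc u0 * (a * v0 + b * v1) ≤ |u0 * (a * v0 + b * v1)| := le_abs_self _
      _ = |u0| * |a * v0 + b * v1| := abs_mul _ _
      _ ≤ 1 * |a * v0 + b * v1| := mul_le_mul_of_nonneg_right hu0 (abs_nonneg _)
      _ = |a * v0 + b * v1| := one_mul _
  have h2 : c * (u1 * v0) - d * (u1 * v1) ≤ |c * v0 - d * v1| := by
    have e : c * (u1 * v0) - d * (u1 * v1) = u1 * (c * v0 - d * v1) := by ring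
    rw [e]
    calc u1 * (c * v0 - d * v1) ≤ |u1 * (c * v0 - d * v1)| := le_abs_self _
      _ = |u1| * |c * v0 - d * v1| := abs_mul _ _
      _ ≤ 1 * |c * v0 - d * v1| := mul_le_mul_of_nonneg_right hu1 (abs_nonneg _)
      _ = |c * v0 - d * v1| := one_mul _
  have key : |a * v0 + b * v1| + |c * v0 - d * v1| ≤ 1 - 2 * m := by
    rcases abs_cases (a * v0 + b * v1) with ⟨e1, _⟩ | ⟨e1, _⟩ <;>
      rcases abs_cases (c * v0 - d * v1) with ⟨e2, _⟩ | ⟨e2, _⟩ <;>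
      rw [e1, e2] <;>
      linarith [mul_nonneg (by linarith : (0:ℝ) ≤ a - m) (by linarith : (0:ℝ) ≤ 1 - v0),
        mul_nonneg (by linarith : (0:ℝ) ≤ a - m) (by linarith : (0:ℝ) ≤ 1 + v0),
        mul_nonneg (by linarith : (0:ℝ) ≤ b - m) (by linarith : (0:ℝ) ≤ 1 - v1),
        mul_nonneg (by linarith : (0:ℝ) ≤ b - m) (by linarith : (0:ℝ) ≤ 1 + v1),
        mul_nonneg (by linarith : (0:ℝ) ≤ c - m) (by linarith : (0:ℝ) ≤ 1 - v0),
        mul_nonneg (by linarith : (0:ℝ) ≤ c - m) (by linarith : (0:ℝ) ≤ 1 + v0),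
        mul_nonneg (by linarith : (0:ℝ) ≤ d - m) (by linarith : (0:ℝ) ≤ 1 - v1),
        mul_nonneg (by linarith : (0:ℝ) ≤ d - m) (by linarith : (0:ℝ) ≤ 1 + v1),
        mul_nonneg hm (by linarith : (0:ℝ) ≤ 1 - v0),
        mul_nonneg hm (by linarith : (0:ℝ) ≤ 1 + v0),
        mul_nonneg hm (by linarith : (0:ℝ) ≤ 1 - v1),
        mul_nonneg hm (by linarith : (0:ℝ) ≤ 1 + v1)]
  linarith

theorem stmt_12 (ℓ h : ℝ) (hℓ0 : 0 ≤ ℓ) (hℓ : ℓ ≤ 1 / 4) (hh : 1 / 4 ≤ h) (hh1 : h ≤ 1)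
    (Λ : Finset ℕ) (ρ : ℕ → ℝ)
    (q : ℕ → Fin 2 → Fin 2 → ℝ)
    (α β : ℕ → Fin 2 → Fin 2 → ℝ)
    (hρ0 : ∀ l ∈ Λ, 0 ≤ ρ l) (hρ1 : ∑ l ∈ Λ, ρ l = 1)
    (hqbd : ∀ l ∈ Λ, ∀ x y, ℓ ≤ q l x y ∧ q l x y ≤ h)
    (hqsum : ∀ l ∈ Λ, ∑ x : Fin 2, ∑ y : Fin 2, q l x y = 1)
    (hα0 : ∀ l ∈ Λ, ∀ a x, 0 ≤ α l a x)
    (hα1 : ∀ l ∈ Λ, ∀ x, ∑ a : Fin 2, α l a x = 1)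
    (hβ0 : ∀ l ∈ Λ, ∀ b y, 0 ≤ β l b y)
    (hβ1 : ∀ l ∈ Λ, ∀ y, ∑ b : Fin 2, β l b y = 1)
    (P : Fin 2 → Fin 2 → Fin 2 → Fin 2 → ℝ)
    (hP : ∀ a b x y, P a b x y = ∑ l ∈ Λ, ρ l * q l x y * α l a x * β l b y) :
    (∑ a : Fin 2, ∑ b : Fin 2, ∑ x : Fin 2, ∑ y : Fin 2,
        (-1 : ℝ) ^ ((a : ℕ) + (b : ℕ) + (x : ℕ) * (y : ℕ)) * P a b x y) ≤
      1 - 2 * max ℓ (1 - 3 * h) := by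
  set m := max ℓ (1 - 3 * h) with hm
  have hL : (∑ a : Fin 2, ∑ b : Fin 2, ∑ x : Fin 2, ∑ y : Fin 2,
        (-1 : ℝ) ^ ((a : ℕ) + (b : ℕ) + (x : ℕ) * (y : ℕ)) * P a b x y) =
      ∑ l ∈ Λ, ρ l * (q l 0 0 * ((α l 0 0 - α l 1 0) * (β l 0 0 - β l 1 0))
        + q l 0 1 * ((α l 0 0 - α l 1 0) * (β l 0 1 - β l 1 1))
        + q l 1 0 * ((α l 0 1 - α l 1 1) * (β l 0 0 - β l 1 0))
        - q l 1 1 * ((α l 0 1 - α l 1 1) * (β l 0 1 - β l 1 1))) := by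
    simp only [hP, Fin.sum_univ_two, Fin.val_zero, Fin.val_one, Finset.mul_sum,
      ← Finset.sum_add_distrib, ← Finset.sum_sub_distrib, ← Finset.sum_neg_distrib]
    refine Finset.sum_congr rfl fun l _ => ?_
    norm_num
    ring
  rw [hL]
  have hbd : ∀ l ∈ Λ, ρ l * (q l 0 0 * ((α l 0 0 - α l 1 0) * (β l 0 0 - β l 1 0))
        + q l 0 1 * ((α l 0 0 - α l 1 0) * (β l 0 1 - β l 1 1))
        + q l 1 0 * ((α l 0 1 - α l 1 1) * (β l 0 0 - β l 1 0))
        - q l 1 1 * ((α l 0 1 - α l 1 1) * (β l 0 1 - β l 1 1))) ≤ ρ l * (1 - 2 * m) := by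
    intro l hl
    have hsum := hqsum l hl
    simp only [Fin.sum_univ_two] at hsum
    have h1 := hqbd l hl 0 0
    have h2 := hqbd l hl 0 1
    have h3 := hqbd l hl 1 0
    have h4 := hqbd l hl 1 1
    have hq00 : m ≤ q l 0 0 := max_le h1.1 (by linarith [h2.2, h3.2, h4.2])
    have hq01 : m ≤ q l 0 1 := max_le h2.1 (by linarith [h1.2, h3.2, h4.2])
    have hq10 : m ≤ q l 1 0 := max_le h3.1 (by linarith [h1.2, h2.2, h4.2])
    have hq11 : m ≤ q l 1 1 := max_le h4.1 (by linarith [h1.2, h2.2, h3.2])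
    have hm0 : 0 ≤ m := le_trans hℓ0 (le_max_left _ _)
    have hu : ∀ x, |α l 0 x - α l 1 x| ≤ 1 := by
      intro x
      have h1 := hα1 l hl x
      simp only [Fin.sum_univ_two] at h1
      rw [abs_le]
      constructor <;> nlinarith [hα0 l hl 0 x, hα0 l hl 1 x]
    have hv : ∀ y, |β l 0 y - β l 1 y| ≤ 1 := by
      intro y
      have h1 := hβ1 l hl y
      simp only [Fin.sum_univ_two] at h1
      rw [abs_le]
      constructor <;> nlinarith [hβ0 l hl 0 y, hβ0 l hl 1 y]
    refine mul_le_mul_of_nonneg_left ?_ (hρ0 l hl)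
    exact chsh_aux m (q l 0 0) (q l 0 1) (q l 1 0) (q l 1 1) _ _ _ _ hm0
      hq00 hq01 hq10 hq11 (by linarith)
      (hu 0) (hu 1) (hv 0) (hv 1)
  calc ∑ l ∈ Λ, _ ≤ ∑ l ∈ Λ, ρ l * (1 - 2 * m) := Finset.sum_le_sum hbd
    _ = 1 - 2 * m := by rw [← Finset.sum_mul, hρ1, one_mul]
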